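/- Let S be an infinite set with DC_S, and suppose DC_{P(S^{<ω})} holds. If (A_a : a ∈ S) is a family of sets each belonging to the quasi-club filter μ_S, then the diagonal intersection Δ_{a∈S} A_a = {σ ∈ [S]^ω : ∀ a ∈ σ, σ ∈ A_a} belongs to μ_S; that is, μ_S is normal. -/

import Mathlib

open Set

universe u

/-- The collection `[S]^ω` of countable subsets of `S`. -/
abbrev Cw (S : Type u) := {σ : Set S // σ.Countable}

/-- Dependent choice for the set `S`. -/
def DCax (S : Type u) : Prop :=
  ∀ R : S → S → Prop, (∀ x, ∃ y, R x y) →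
    ∀ x : S, ∃ f : ℕ → S, f 0 = x ∧ ∀ n, R (f n) (f (n + 1))

/-- `F` is a filter on `[S]^ω`: contains everything, upward closed, closed under
binary intersections. -/
def IsSetFilter (S : Type u) (F : Set (Set (Cw S))) : Prop :=
  Set.univ ∈ F ∧ (∀ A B : Set (Cw S), A ∈ F → A ⊆ B → B ∈ F) ∧
    (∀ A B : Set (Cw S), A ∈ F → B ∈ F → A ∩ B ∈ F)

/-- `F` is fine. -/
def IsFine (S : Type u) (F : Set (Set (Cw S))) : Prop :=
  ∀ τ : Cw S, {σ : Cw S | τ.1 ⊆ σ.1} ∈ F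

/-- `F` has the diagonal intersection property. -/
def HasDiagInter (S : Type u) (F : Set (Set (Cw S))) : Prop :=
  ∀ B : S → Set (Cw S), (∀ a : S, B a ∈ F) →
    {σ : Cw S | ∀ a ∈ σ.1, σ ∈ B a} ∈ F

/-- `F` is normal: every regressive-like assignment on an `F`-positive set is
constant-containing on an `F`-positive set. -/
def IsNormalFilter (S : Type u) (F : Set (Set (Cw S))) : Prop :=
  ∀ A : Set (Cw S), Aᶜ ∉ F →
    ∀ G : Cw S → Cw S, (∀ σ ∈ A, (G σ).1.Nonempty ∧ (G σ).1 ⊆ σ.1) →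
      ∃ a : S, {σ : Cw S | σ ∈ A ∧ a ∈ (G σ).1}ᶜ ∉ F

/-- A supercompactness measure on `[S]^ω`: a (proper) normal fine ultrafilter. -/
def IsSCMeasure (S : Type u) (F : Set (Set (Cw S))) : Prop :=
  IsSetFilter S F ∧ ∅ ∉ F ∧ IsFine S F ∧ HasDiagInter S F ∧
    ∀ A : Set (Cw S), A ∈ F ∨ Aᶜ ∈ F

/-- A quasi-strategy for Player II (who moves at odd-length-so-far positions,
i.e. positions of odd length are II's turn... here: II moves when the current
position has odd length). -/
def IsQStratII (S : Type u) (T : Set (List S)) : Prop :=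
  [] ∈ T ∧ (∀ p ∈ T, Even p.length → ∀ a : S, p ++ [a] ∈ T) ∧
    (∀ p ∈ T, ¬ Even p.length → ∃ b : S, p ++ [b] ∈ T)

/-- A quasi-strategy for Player I. -/
def IsQStratI (S : Type u) (T : Set (List S)) : Prop :=
  [] ∈ T ∧ (∀ p ∈ T, ¬ Even p.length → ∀ b : S, p ++ [b] ∈ T) ∧
    (∀ p ∈ T, Even p.length → ∃ a : S, p ++ [a] ∈ T)

/-- The infinite play `f` is consistent with the tree `T`. -/
def PlayThrough (S : Type u) (T : Set (List S)) (f : ℕ → S) : Prop :=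
  ∀ n : ℕ, (List.ofFn fun i : Fin n => f i) ∈ T

/-- The countable set of all elements played in the play `f`. -/
def playSet (S : Type u) (f : ℕ → S) : Cw S :=
  ⟨Set.range f, Set.countable_range f⟩

/-- `T` is a winning quasi-strategy for Player II in the club game on `S` with payoff `A`. -/
def WinsClubII (S : Type u) (T : Set (List S)) (A : Set (Cw S)) : Prop :=
  IsQStratII S T ∧ ∀ f : ℕ → S, PlayThrough S T f → playSet S f ∈ A

/-- `T` is a winning quasi-strategy for Player I in the club game on `S` with payoff `A`
(for Player II). -/
def WinsClubI (S : Type u) (T : Set (List S)) (A : Set (Cw S)) : Prop :=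
  IsQStratI S T ∧ ∀ f : ℕ → S, PlayThrough S T f → playSet S f ∉ A

/-- The quasi-club filter `μ_S`. -/
def qclub (S : Type u) : Set (Set (Cw S)) :=
  {A | ∃ T : Set (List S), WinsClubII S T A}

/-- Winning quasi-strategy for Player II in the length-ω game on `S` with payoff `A ⊆ S^ω`. -/
def WinsGameQSII (S : Type u) (T : Set (List S)) (A : Set (ℕ → S)) : Prop :=
  IsQStratII S T ∧ ∀ f : ℕ → S, PlayThrough S T f → f ∈ A

/-- Winning quasi-strategy for Player I in the length-ω game on `S` with payoff `A ⊆ S^ω`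
(for Player II). -/
def WinsGameQSI (S : Type u) (T : Set (List S)) (A : Set (ℕ → S)) : Prop :=
  IsQStratI S T ∧ ∀ f : ℕ → S, PlayThrough S T f → f ∉ A

/-- The play `f` follows the strategy `s` for Player I (who moves at even rounds). -/
def StratFollowsI (S : Type u) (s : List S → S) (f : ℕ → S) : Prop :=
  ∀ n : ℕ, Even n → f n = s (List.ofFn fun i : Fin n => f i)

/-- The play `f` follows the strategy `s` for Player II (who moves at odd rounds). -/
def StratFollowsII (S : Type u) (s : List S → S) (f : ℕ → S) : Prop :=
  ∀ n : ℕ, ¬ Even n → f n = s (List.ofFn fun i : Fin n => f i)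

/-- `AD_ℝ`: every length-ω two-player game with moves from `ℝ` is determined. -/
def ADReal : Prop :=
  ∀ A : Set (ℕ → ℝ),
    (∃ s : List ℝ → ℝ, ∀ f : ℕ → ℝ, StratFollowsI ℝ s f → f ∉ A) ∨
    (∃ s : List ℝ → ℝ, ∀ f : ℕ → ℝ, StratFollowsII ℝ s f → f ∈ A)


namespace QClubAux

variable {S : Type u}

/-- The position after `n` moves when Player I's moves are enumerated by `x`
and Player II responds using the strategy `t`. -/
def playL (t : List S → S) (x : ℕ → S) : ℕ → List S
  | 0 => []
  | n + 1 => playL t x n ++ [if Even n then x (n / 2) else t (playL t x n)]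

/-- The `n`-th move of the play. -/
def playF (t : List S → S) (x : ℕ → S) (n : ℕ) : S :=
  if Even n then x (n / 2) else t (playL t x n)

lemma playL_succ (t : List S → S) (x : ℕ → S) (n : ℕ) :
    playL t x (n + 1) = playL t x n ++ [playF t x n] := rfl

lemma length_playL (t : List S → S) (x : ℕ → S) : ∀ n, (playL t x n).length = n
  | 0 => rfl
  | n + 1 => by simp [playL_succ, length_playL t x n]

lemma playL_eq_ofFn (t : List S → S) (x : ℕ → S) :
    ∀ n, playL t x n = List.ofFn (fun i : Fin n => playF t x i)
  | 0 => rfl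
  | n + 1 => by
    rw [playL_succ, playL_eq_ofFn t x n, List.ofFn_succ']
    simp [List.concat_eq_append, Fin.last]

lemma playL_congr (t : List S → S) {x y : ℕ → S} :
    ∀ n, (∀ i, 2 * i < n → x i = y i) → playL t x n = playL t y n
  | 0, _ => rfl
  | n + 1, h => by
    have ih := playL_congr t n (fun i hi => h i (Nat.lt_succ_of_lt hi))
    rw [playL_succ, playL_succ, ih]
    congr 1
    unfold playF
    by_cases hn : Even n
    · obtain ⟨k, hk⟩ := hn
      have hnk : n / 2 = k := by omega
      rw [if_pos ⟨k, hk⟩, if_pos ⟨k, hk⟩, hnk, h k (by omega)]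
    · rw [if_neg hn, if_neg hn, ih]

lemma playL_mem {t : List S → S} {T : Set (List S)} (hq : IsQStratII S T)
    (ht : ∀ p ∈ T, ¬ Even p.length → p ++ [t p] ∈ T) (x : ℕ → S) :
    ∀ n, playL t x n ∈ T
  | 0 => hq.1
  | n + 1 => by
    have ih := playL_mem hq ht x n
    rw [playL_succ]
    unfold playF
    by_cases hn : Even n
    · rw [if_pos hn]
      exact hq.2.1 _ ih (by rw [length_playL]; exact hn) _
    · rw [if_neg hn]
      exact ht _ ih (by rw [length_playL]; exact hn)

/-- The master strategy: decode a task from the length of the position. -/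
noncomputable def master [Nonempty S] (s : S → List S → S) (p : List S) : S :=
  s (p.getD (Denumerable.ofNat (ℕ × ℕ × List ℕ) (Nat.unpair (p.length / 2)).2).1
      (Classical.arbitrary S))
    (playL
      (s (p.getD (Denumerable.ofNat (ℕ × ℕ × List ℕ) (Nat.unpair (p.length / 2)).2).1
        (Classical.arbitrary S)))
      (fun i => p.getD
        ((Denumerable.ofNat (ℕ × ℕ × List ℕ) (Nat.unpair (p.length / 2)).2).2.2.getD i 0)
        (Classical.arbitrary S))
      (2 * (Denumerable.ofNat (ℕ × ℕ × List ℕ) (Nat.unpair (p.length / 2)).2).2.1 + 1))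

lemma master_eq [Nonempty S] (s : S → List S → S) (p : List S) {m k : ℕ} {js : List ℕ}
    (h : Denumerable.ofNat (ℕ × ℕ × List ℕ) (Nat.unpair (p.length / 2)).2 = (m, k, js)) :
    master s p = s (p.getD m (Classical.arbitrary S))
      (playL (s (p.getD m (Classical.arbitrary S)))
        (fun i => p.getD (js.getD i 0) (Classical.arbitrary S)) (2 * k + 1)) := by
  unfold master
  rw [h]

lemma take_ofFn (f : ℕ → S) {m n : ℕ} (h : m ≤ n) :
    (List.ofFn fun i : Fin n => f i).take m = List.ofFn fun i : Fin m => f i := by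
  apply List.ext_getElem
  · simp [Nat.min_eq_left h]
  · intro i h1 h2
    simp [List.getElem_take, List.getElem_ofFn]

lemma le_foldr_max : ∀ (l : List ℕ), ∀ x ∈ l, x ≤ l.foldr max 0 := by
  intro l
  induction l with
  | nil => simp
  | cons a l ih =>
    intro x hx
    rcases List.mem_cons.mp hx with rfl | hx
    · exact le_max_left _ _
    · exact le_trans (ih x hx) (le_max_right _ _)

end QClubAux

/-- assuming `DC_S` and `DC_{P(S^{<ω})}`, the quasi-club filter is
normal, i.e. closed under diagonal intersections. -/
theorem qclub_normal (S : Type u) [Infinite S] (hDC : DCax S)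
    (hDC2 : DCax (Set (List S)))
    (B : S → Set (Cw S)) (hB : ∀ a : S, B a ∈ qclub S) :
    {σ : Cw S | ∀ a ∈ σ.1, σ ∈ B a} ∈ qclub S := by
  classical
  have hne : Nonempty S := inferInstance
  choose T hT using hB
  have hs' : ∀ a : S, ∃ sa : List S → S,
      ∀ p ∈ T a, ¬ Even p.length → p ++ [sa p] ∈ T a := by
    intro a
    choose g hg using (hT a).1.2.2
    refine ⟨fun p => if h : p ∈ T a ∧ ¬ Even p.length then g p h.1 h.2
      else Classical.arbitrary S, ?_⟩
    intro p hp he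
    have hcond : p ∈ T a ∧ ¬ Even p.length := ⟨hp, he⟩
    simp only [dif_pos hcond]
    exact hg p hp he
  choose s hs using hs'
  refine ⟨{p : List S | ∀ k < p.length, ¬ Even k →
      p.getD k (Classical.arbitrary S) = QClubAux.master s (p.take k)}, ⟨?_, ?_, ?_⟩, ?_⟩
  · intro k hk
    simp at hk
  · -- even positions: every move by I allowed
    intro p hp hev a k hk hodd
    simp only [Set.mem_setOf_eq] at hp ⊢
    simp only [List.length_append, List.length_singleton] at hk
    rcases lt_or_eq_of_le (Nat.lt_succ_iff.mp hk) with h | h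
    · rw [List.getD_eq_getElem _ _ (by simp; omega), List.getElem_append_left h,
        List.take_append_of_le_length (le_of_lt h),
        ← List.getD_eq_getElem p (Classical.arbitrary S) h]
      exact hp k h hodd
    · subst h
      exact absurd hev hodd
  · -- odd positions: master provides a move
    intro p hp hodd
    refine ⟨QClubAux.master s p, ?_⟩
    intro k hk hko
    simp only [Set.mem_setOf_eq] at hp ⊢
    simp only [List.length_append, List.length_singleton] at hk
    rcases lt_or_eq_of_le (Nat.lt_succ_iff.mp hk) with h | h
    · rw [List.getD_eq_getElem _ _ (by simp; omega), List.getElem_append_left h,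
        List.take_append_of_le_length (le_of_lt h),
        ← List.getD_eq_getElem p (Classical.arbitrary S) h]
      exact hp k h hko
    · subst h
      rw [List.getD_eq_getElem _ _ (by simp), List.getElem_concat_length (l := p) (i := p.length) rfl,
        List.take_left]
  · -- the winning condition
    intro f hf
    have hplay : ∀ n, ¬ Even n →
        f n = QClubAux.master s (List.ofFn fun i : Fin n => f i) := by
      intro n hn
      have h1 := hf (n + 1) n (by simp) hn
      rwa [List.getD_eq_getElem _ _ (by simp), List.getElem_ofFn,
        QClubAux.take_ofFn f (Nat.le_succ n)] at h1
    have hclose : ∀ (m k : ℕ) (js : List ℕ),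
        s (f m) (QClubAux.playL (s (f m)) (fun i => f (js.getD i 0)) (2 * k + 1))
          ∈ Set.range f := by
      intro m k js
      set c := Encodable.encode ((m, k, js) : ℕ × ℕ × List ℕ) with hc
      set M := (m :: js).foldr max 0 with hM
      set n := Nat.pair (max M c) c with hn
      have hMn : M ≤ n := le_trans (le_max_left _ _) (Nat.left_le_pair _ _)
      have hmM : m ≤ M := QClubAux.le_foldr_max _ m List.mem_cons_self
      have hjsM : ∀ i : ℕ, js.getD i 0 ≤ M := by
        intro i
        by_cases hi : i < js.length
        · rw [List.getD_eq_getElem _ _ hi]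
          exact QClubAux.le_foldr_max (m :: js) _ (List.mem_cons_of_mem _ (js.getElem_mem hi))
        · rw [List.getD_eq_default _ _ (le_of_not_gt hi)]
          exact Nat.zero_le _
      have hlen : (List.ofFn fun i : Fin (2 * n + 1) => f i).length = 2 * n + 1 := by simp
      have hdec : Denumerable.ofNat (ℕ × ℕ × List ℕ)
          (Nat.unpair ((List.ofFn fun i : Fin (2 * n + 1) => f i).length / 2)).2
            = (m, k, js) := by
        rw [hlen]
        have h2 : (2 * n + 1) / 2 = n := by omega
        rw [h2, hn, Nat.unpair_pair]
        exact Denumerable.ofNat_encode _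
      have hgetD : ∀ j : ℕ, j ≤ n →
          (List.ofFn fun i : Fin (2 * n + 1) => f i).getD j (Classical.arbitrary S) = f j := by
        intro j hj
        rw [List.getD_eq_getElem _ _ (by rw [hlen]; omega)]
        exact List.getElem_ofFn _
      have key := hplay (2 * n + 1) (by simp [parity_simps])
      rw [QClubAux.master_eq s _ hdec, hgetD m (le_trans hmM hMn)] at key
      have hx : (fun i => (List.ofFn fun i : Fin (2 * n + 1) => f i).getD (js.getD i 0)
          (Classical.arbitrary S)) = fun i => f (js.getD i 0) := by
        funext i
        exact hgetD _ (le_trans (hjsM i) hMn)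
      rw [hx] at key
      exact ⟨2 * n + 1, key⟩
    intro a ha
    obtain ⟨m, rfl⟩ := ha
    have hthru : PlayThrough S (T (f m)) (QClubAux.playF (s (f m)) f) := by
      intro n
      rw [← QClubAux.playL_eq_ofFn]
      exact QClubAux.playL_mem (hT (f m)).1 (hs (f m)) f n
    have hmem := (hT (f m)).2 _ hthru
    have hrange : Set.range (QClubAux.playF (s (f m)) f) = Set.range f := by
      apply Set.Subset.antisymm
      · rintro _ ⟨n, rfl⟩
        unfold QClubAux.playF
        by_cases hn : Even n
        · rw [if_pos hn]; exact ⟨n / 2, rfl⟩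
        · rw [if_neg hn]
          obtain ⟨k, hk⟩ := Nat.not_even_iff_odd.mp hn
          subst hk
          have hcongr : QClubAux.playL (s (f m))
              (fun i => f ((List.range (k + 1)).getD i 0)) (2 * k + 1)
              = QClubAux.playL (s (f m)) f (2 * k + 1) := by
            apply QClubAux.playL_congr
            intro i hi
            have hik : i < k + 1 := by omega
            congr 1
            rw [List.getD_eq_getElem _ _ (by simpa using hik), List.getElem_range]
          have hcl := hclose m k (List.range (k + 1))
          rw [hcongr] at hcl
          exact hcl
      · rintro _ ⟨n, rfl⟩
        refine ⟨2 * n, ?_⟩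
        unfold QClubAux.playF
        rw [if_pos ⟨n, by ring⟩]
        congr 1
        omega
    have hset : playSet S (QClubAux.playF (s (f m)) f) = playSet S f :=
      Subtype.ext hrange
    rwa [hset] at hmem
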